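/- Let c be a choice function on a finite nonempty set X and let 1 ≤ j ≤ |X|−1. Then sp(c) = j if and only if c violates WARP under constant nonreciprocal selection of j items, i.e.: (i) for every subset D ⊂ X with |D| < j there is a reversal (A, B) of c with c(A) ∉ D and c(B) ∉ D; and (ii) there is a set {x_1, …, x_j} ⊂ X of j distinct items such that (a) every reversal (A, B) of c satisfies c(A) = x_h or c(B) = x_h for some h ∈ {1, …, j}, and (b) there are reversals (A_1, B_1), …, (A_j, B_j) of c such that for every h ∈ {1, …, j}, either x_h = c(A_h) and y_h = c(B_h), or y_h = c(A_h) and x_h = c(B_h), for some y_h ∈ X \ {x_1, …, x_j}. -/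

import Mathlib

variable {X : Type*}

/-- A strict linear order: asymmetric, transitive, complete. -/
def IsSLO (r : X → X → Prop) : Prop :=
  (∀ a b : X, r a b → ¬ r b a) ∧ (∀ a b d : X, r a b → r b d → r a d) ∧
    (∀ a b : X, a ≠ b → r a b ∨ r b a)

/-- The set of the top `i` elements of `X` with respect to `r`
(those with fewer than `i` elements strictly above them). -/
def topSet (r : X → X → Prop) (i : ℕ) : Set X := {a | Set.ncard {b | r b a} < i}

/-- The `i`-th harmful distortion of `r`: the top `i` elements are moved,
in reverse order, below all the other elements. -/
def harmful (r : X → X → Prop) (i : ℕ) : X → X → Prop := fun a b =>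
  (b ∈ topSet r i ∧ (a ∈ topSet r i → r b a)) ∨
    (a ∉ topSet r i ∧ b ∉ topSet r i ∧ r a b)

/-- A choice function selects an element from every nonempty menu. -/
def IsChoice (c : Finset X → X) : Prop := ∀ A : Finset X, A.Nonempty → c A ∈ A

/-- `x` is the `r`-maximum of the menu `A`. -/
def IsMaxOf (r : X → X → Prop) (A : Finset X) (x : X) : Prop :=
  x ∈ A ∧ ∀ y ∈ A, y ≠ x → r x y

/-- A reversal (violation of WARP) of `c`. -/
def IsReversal [DecidableEq X] (c : Finset X → X) (A B : Finset X) : Prop :=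
  A.Nonempty ∧ B.Nonempty ∧ A ≠ B ∧ c A ≠ c B ∧ c A ∈ A ∩ B ∧ c B ∈ A ∩ B

/-- `I` is (the index set of) a rationalization by self-punishment of `c` by `r`. -/
def RSP [Fintype X] (c : Finset X → X) (r : X → X → Prop) (I : Finset ℕ) : Prop :=
  I.Nonempty ∧ (∀ i ∈ I, i ≤ Fintype.card X - 1) ∧
    ∀ A : Finset X, A.Nonempty → ∃ i ∈ I, IsMaxOf (harmful r i) A (c A)

/-- The degree of self-punishment of `c`: the minimum over all strict linear orders `r`
and all rationalizations by self-punishment of `c` by `r` of the maximal index used. -/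
noncomputable def sp [Fintype X] (c : Finset X → X) : ℕ :=
  sInf { m : ℕ | ∃ r : X → X → Prop, IsSLO r ∧ ∃ I : Finset ℕ,
    RSP c r I ∧ m ∈ I ∧ ∀ i ∈ I, i ≤ m }

/-- `c` is inconsistent: every ordered pair of distinct items is selected in some reversal. -/
def Inconsistent [DecidableEq X] (c : Finset X → X) : Prop :=
  ∀ x y : X, x ≠ y → ∃ A B : Finset X, IsReversal c A B ∧ c A = x ∧ c B = y

/-- The revealed preference `▷^{c,x}`. -/
def cxPref (c : Finset X → X) (x : X) : X → X → Prop := fun y z =>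
  (y = x ∧ z ≠ x) ∨
    (y ≠ x ∧ z ≠ x ∧ y ≠ z ∧ ∃ A : Finset X, x ∉ A ∧ z ∈ A ∧ c A = y)

/-- `c` violates WARP under constant nonreciprocal selection of `j` items. -/
def ViolatesCNS [Fintype X] [DecidableEq X] (c : Finset X → X) (j : ℕ) : Prop :=
  (∀ D : Finset X, D.card < j → ∃ A B : Finset X, IsReversal c A B ∧ c A ∉ D ∧ c B ∉ D) ∧
    ∃ xs : Finset X, xs.card = j ∧
      (∀ A B : Finset X, IsReversal c A B → c A ∈ xs ∨ c B ∈ xs) ∧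
      (∀ x ∈ xs, ∃ A B : Finset X, ∃ y : X, IsReversal c A B ∧ y ∉ xs ∧
        ((c A = x ∧ c B = y) ∨ (c A = y ∧ c B = x)))

/-- The relation `▷^c` built from the witnesses `x 1, …, x j`. -/
def witnessPref (c : Finset X → X) (x : ℕ → X) (j : ℕ) : X → X → Prop := fun y z =>
  (∃ g h : ℕ, 1 ≤ g ∧ g < h ∧ h ≤ j ∧ y = x g ∧ z = x h) ∨
    ((∀ g : ℕ, 1 ≤ g → g ≤ j → y ≠ x g) ∧ (∀ g : ℕ, 1 ≤ g → g ≤ j → z ≠ x g) ∧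
      ∃ A : Finset X, z ∈ A ∧ c A = y) ∨
    ((∃ g : ℕ, 1 ≤ g ∧ g ≤ j ∧ y = x g) ∧ (∀ g : ℕ, 1 ≤ g → g ≤ j → z ≠ x g))

section Aux

/-- rank: number of elements strictly above `x`. -/
noncomputable def rk (r : X → X → Prop) (x : X) : ℕ := Set.ncard {b | r b x}

lemma slo_irrefl {r : X → X → Prop} (hr : IsSLO r) (x : X) : ¬ r x x :=
  fun h => hr.1 x x h h

lemma rk_lt [Finite X] {r : X → X → Prop} (hr : IsSLO r) {x y : X} (h : r x y) : rk r x < rk r y := by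
  apply Set.ncard_lt_ncard _ (Set.toFinite _)
  constructor
  · intro b hb; exact hr.2.1 b x y hb h
  · intro hsub
    exact slo_irrefl hr x (hsub h)

lemma r_of_rk_le [Finite X] {r : X → X → Prop} (hr : IsSLO r) {x y : X} (h : x ≠ y)
    (hle : rk r x ≤ rk r y) : r x y :=
  (hr.2.2 x y h).resolve_right fun h' => absurd (rk_lt hr h') (not_lt.2 hle)

end Aux

section Aux2

lemma mem_topSet {r : X → X → Prop} {i : ℕ} {x : X} : x ∈ topSet r i ↔ rk r x < i := Iff.rfl

lemma isMax_harmful_rk [Finite X] {r : X → X → Prop} (hr : IsSLO r) {A : Finset X} {x : X}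
    (hx : x ∈ A) : IsMaxOf (harmful r (rk r x)) A x := by
  refine ⟨hx, fun y hy hne => ?_⟩
  by_cases h : rk r y < rk r x
  · exact Or.inl ⟨h, fun hx' => absurd (mem_topSet.1 hx') (lt_irrefl _)⟩
  · exact Or.inr ⟨fun hx' => absurd (mem_topSet.1 hx') (lt_irrefl _),
      fun hy' => h (mem_topSet.1 hy'), r_of_rk_le hr hne.symm (not_lt.1 h)⟩

def Covers [DecidableEq X] (c : Finset X → X) (T : Finset X) : Prop :=
  ∀ A B : Finset X, IsReversal c A B → c A ∈ T ∨ c B ∈ T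

lemma mk_reversal [DecidableEq X] {c : Finset X → X} (hc : IsChoice c) {A B : Finset X}
    (hA : A.Nonempty) (hB : B.Nonempty) (hne : c A ≠ c B) (h1 : c A ∈ B) (h2 : c B ∈ A) :
    IsReversal c A B :=
  ⟨hA, hB, fun h => hne (congrArg c h), hne, Finset.mem_inter.2 ⟨hc A hA, h1⟩,
    Finset.mem_inter.2 ⟨h2, hc B hB⟩⟩

lemma pair_choice [DecidableEq X] {c : Finset X → X} {T : Finset X} (hc : IsChoice c)
    (hT : Covers c T) {a b : X} (ha : a ∉ T) (hb : b ∉ T) (hab : a ≠ b)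
    {A : Finset X} (hbA : b ∈ A) (hcA : c A = a) : c {a, b} = a := by
  have hpne : ({a, b} : Finset X).Nonempty := ⟨a, Finset.mem_insert_self a _⟩
  rcases Finset.mem_insert.1 (hc _ hpne) with h | h
  · exact h
  · have h : c {a, b} = b := Finset.mem_singleton.1 h
    exfalso
    have hrev : IsReversal c A {a, b} := mk_reversal hc ⟨b, hbA⟩ hpne
      (by rw [hcA, h]; exact hab) (by rw [hcA]; exact Finset.mem_insert_self a _)
      (by rw [h]; exact hbA)
    rcases hT A _ hrev with hm | hm
    · rw [hcA] at hm; exact ha hm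
    · rw [h] at hm; exact hb hm

lemma pair_trans [DecidableEq X] {c : Finset X → X} {T : Finset X} (hc : IsChoice c)
    (hT : Covers c T) {a b d : X} (ha : a ∉ T) (hb : b ∉ T) (hd : d ∉ T)
    (hab : a ≠ b) (hbd : b ≠ d) (h1 : c {a, b} = a) (h2 : c {b, d} = b) :
    a ≠ d ∧ c {a, d} = a := by
  have had : a ≠ d := by
    rintro rfl
    rw [Finset.pair_comm b a, h1] at h2
    exact hab h2
  refine ⟨had, ?_⟩
  rcases Finset.mem_insert.1 (hc {a, d} ⟨a, Finset.mem_insert_self a _⟩) with h | h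
  · exact h
  · have h : c {a, d} = d := Finset.mem_singleton.1 h
    exfalso
    have hM : ({a, b, d} : Finset X).Nonempty := ⟨a, Finset.mem_insert_self a _⟩
    have hbM : b ∈ ({a, b, d} : Finset X) := by simp
    have hdM : d ∈ ({a, b, d} : Finset X) := by simp
    have haM : a ∈ ({a, b, d} : Finset X) := by simp
    have hcM0 := hc _ hM
    simp only [Finset.mem_insert, Finset.mem_singleton] at hcM0
    rcases hcM0 with hcM | hcM | hcM
    · have hrev : IsReversal c {a, b, d} {a, d} := mk_reversal hc hM
        ⟨a, Finset.mem_insert_self a _⟩ (by rw [hcM, h]; exact had)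
        (by rw [hcM]; exact Finset.mem_insert_self a _) (by rw [h]; exact hdM)
      rcases hT _ _ hrev with hm | hm
      · rw [hcM] at hm; exact ha hm
      · rw [h] at hm; exact hd hm
    · have hrev : IsReversal c {a, b, d} {a, b} := mk_reversal hc hM
        ⟨a, Finset.mem_insert_self a _⟩ (by rw [hcM, h1]; exact hab.symm)
        (by rw [hcM]; simp) (by rw [h1]; exact haM)
      rcases hT _ _ hrev with hm | hm
      · rw [hcM] at hm; exact hb hm
      · rw [h1] at hm; exact ha hm
    · have hrev : IsReversal c {a, b, d} {b, d} := mk_reversal hc hM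
        ⟨b, Finset.mem_insert_self b _⟩ (by rw [hcM, h2]; exact hbd.symm)
        (by rw [hcM]; simp) (by rw [h2]; exact hbM)
      rcases hT _ _ hrev with hm | hm
      · rw [hcM] at hm; exact hd hm
      · rw [h2] at hm; exact hb hm

end Aux2

section Aux3

lemma covers_mem_spSet [Fintype X] [DecidableEq X] {c : Finset X → X} (hc : IsChoice c)
    {T : Finset X} {m : ℕ} (hT : Covers c T) (hm : T.card = m)
    (hmn : m ≤ Fintype.card X - 1) :
    ∃ r : X → X → Prop, IsSLO r ∧ ∃ I : Finset ℕ, RSP c r I ∧ m ∈ I ∧ ∀ i ∈ I, i ≤ m := by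
  classical
  let e := Fintype.equivFin X
  set r : X → X → Prop := fun a b =>
    (a ∈ T ∧ b ∉ T) ∨ (a ∈ T ∧ b ∈ T ∧ e a < e b) ∨ (a ∉ T ∧ b ∉ T ∧ a ≠ b ∧ c {a, b} = a)
    with hrdef
  -- extraction helpers
  have hTT : ∀ {u v : X}, r u v → u ∈ T → v ∈ T → e u < e v := by
    rintro u v (⟨_, h⟩ | ⟨_, _, h⟩ | ⟨h, _⟩) hu hv
    exacts [absurd hv h, h, absurd hu h]
  have hYY : ∀ {u v : X}, r u v → u ∉ T → u ≠ v ∧ c {u, v} = u := by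
    rintro u v (⟨h, _⟩ | ⟨h, _⟩ | ⟨_, _, h1, h2⟩) hu
    exacts [absurd h hu, absurd h hu, ⟨h1, h2⟩]
  have hYT : ∀ {u v : X}, r u v → u ∉ T → v ∉ T := by
    rintro u v (⟨h, _⟩ | ⟨h, _⟩ | ⟨_, h, _⟩) hu
    exacts [absurd h hu, absurd h hu, h]
  have hTY : ∀ {u v : X}, r u v → v ∈ T → u ∈ T := by
    rintro u v (⟨_, h⟩ | ⟨h, _⟩ | ⟨_, h, _⟩) hv
    exacts [absurd hv h, h, absurd hv h]
  have hSLO : IsSLO r := by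
    refine ⟨?_, ?_, ?_⟩
    · -- asymm
      intro a b hab hba
      by_cases haT : a ∈ T
      · by_cases hbT : b ∈ T
        · exact lt_asymm (hTT hab haT hbT) (hTT hba hbT haT)
        · exact hbT (hTY hba haT)
      · obtain ⟨hne, h1⟩ := hYY hab haT
        have hbT := hYT hab haT
        obtain ⟨_, h2⟩ := hYY hba hbT
        rw [Finset.pair_comm b a, h1] at h2
        exact hne h2
    · -- trans
      intro a b d hab hbd
      by_cases haT : a ∈ T
      · by_cases hdT : d ∈ T
        · have hbT : b ∈ T := hTY hbd hdT
          exact Or.inr (Or.inl ⟨haT, hdT, lt_trans (hTT hab haT hbT) (hTT hbd hbT hdT)⟩)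
        · exact Or.inl ⟨haT, hdT⟩
      · have hbT := hYT hab haT
        have hdT := hYT hbd hbT
        obtain ⟨hab', e1⟩ := hYY hab haT
        obtain ⟨hbd', e2⟩ := hYY hbd hbT
        obtain ⟨had, e3⟩ := pair_trans hc hT haT hbT hdT hab' hbd' e1 e2
        exact Or.inr (Or.inr ⟨haT, hdT, had, e3⟩)
    · -- total
      intro a b hab
      by_cases haT : a ∈ T
      · by_cases hbT : b ∈ T
        · rcases lt_or_gt_of_ne (fun h => hab (e.injective h)) with h | h
          · exact Or.inl (Or.inr (Or.inl ⟨haT, hbT, h⟩))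
          · exact Or.inr (Or.inr (Or.inl ⟨hbT, haT, h⟩))
        · exact Or.inl (Or.inl ⟨haT, hbT⟩)
      · by_cases hbT : b ∈ T
        · exact Or.inr (Or.inl ⟨hbT, haT⟩)
        · rcases Finset.mem_insert.1 (hc {a, b} ⟨a, Finset.mem_insert_self a _⟩) with h | h
          · exact Or.inl (Or.inr (Or.inr ⟨haT, hbT, hab, h⟩))
          · have h : c {a, b} = b := Finset.mem_singleton.1 h
            rw [Finset.pair_comm a b] at h
            exact Or.inr (Or.inr (Or.inr ⟨hbT, haT, hab.symm, h⟩))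
  -- rank facts
  have hrkT : ∀ x ∈ T, rk r x < m := by
    intro x hx
    have hmpos : 0 < m := hm ▸ Finset.card_pos.2 ⟨x, hx⟩
    have hsub : {b | r b x} ⊆ (↑T : Set X) \ {x} := by
      rintro b hb
      refine ⟨hTY hb hx, ?_⟩
      rintro rfl
      exact slo_irrefl hSLO b hb
    calc rk r x ≤ Set.ncard ((↑T : Set X) \ {x}) := Set.ncard_le_ncard hsub (Set.toFinite _)
      _ = m - 1 := by
          rw [Set.ncard_diff_singleton_of_mem (by exact_mod_cast hx),
            Set.ncard_coe_finset, hm]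
      _ < m := Nat.sub_lt hmpos one_pos
  have hrkY : ∀ y ∉ T, m ≤ rk r y := by
    intro y hy
    have hsub : (↑T : Set X) ⊆ {b | r b y} := fun b hb => Or.inl ⟨hb, hy⟩
    calc m = Set.ncard (↑T : Set X) := by rw [Set.ncard_coe_finset, hm]
      _ ≤ rk r y := Set.ncard_le_ncard hsub (Set.toFinite _)
  refine ⟨r, hSLO, Finset.range (m + 1),
    ⟨⟨m, Finset.self_mem_range_succ m⟩,
     fun i hi => le_trans (Nat.lt_succ_iff.1 (Finset.mem_range.1 hi)) hmn, ?_⟩,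
    Finset.self_mem_range_succ m,
    fun i hi => Nat.lt_succ_iff.1 (Finset.mem_range.1 hi)⟩
  intro A hA
  by_cases hxT : c A ∈ T
  · exact ⟨rk r (c A), Finset.mem_range.2 ((hrkT _ hxT).trans (Nat.lt_succ_self m)),
      isMax_harmful_rk hSLO (hc A hA)⟩
  · refine ⟨m, Finset.self_mem_range_succ m, hc A hA, fun y hy hne => ?_⟩
    by_cases hyT : y ∈ T
    · exact Or.inl ⟨mem_topSet.2 (hrkT y hyT),
        fun hx' => absurd (mem_topSet.1 hx') (not_lt.2 (hrkY _ hxT))⟩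
    · exact Or.inr ⟨fun hx' => absurd (mem_topSet.1 hx') (not_lt.2 (hrkY _ hxT)),
        fun hy' => absurd (mem_topSet.1 hy') (not_lt.2 (hrkY _ hyT)),
        Or.inr (Or.inr ⟨hxT, hyT, hne.symm, pair_choice hc hT hxT hyT hne.symm hy rfl⟩)⟩

end Aux3

section Aux4

lemma spmem_covers [Fintype X] [DecidableEq X] {c : Finset X → X} {r : X → X → Prop}
    {I : Finset ℕ} {m : ℕ} (hr : IsSLO r) (hR : RSP c r I) (hIm : ∀ i ∈ I, i ≤ m)
    (hmn : m ≤ Fintype.card X) :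
    ∃ T : Finset X, T.card = m ∧ Covers c T := by
  classical
  have hrk_lt : ∀ x : X, rk r x < Fintype.card X := by
    intro x
    have hss : {b | r b x} ⊂ Set.univ :=
      ⟨Set.subset_univ _, fun hsub => slo_irrefl hr x (hsub (Set.mem_univ x))⟩
    have h2 := Set.ncard_lt_ncard hss (Set.toFinite _)
    rwa [Set.ncard_univ, Nat.card_eq_fintype_card] at h2
  have hinj : Function.Injective (rk r) := by
    intro x y hxy
    by_contra hne
    rcases hr.2.2 x y hne with h | h
    · exact absurd hxy (Nat.ne_of_lt (rk_lt hr h))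
    · exact absurd hxy.symm (Nat.ne_of_lt (rk_lt hr h))
  set T : Finset X := Finset.univ.filter (fun x => rk r x < m) with hTdef
  have hcard : T.card = m := by
    have himg : T.image (rk r) = Finset.range m := by
      apply Finset.Subset.antisymm
      · intro v hv
        obtain ⟨x, hx, rfl⟩ := Finset.mem_image.1 hv
        exact Finset.mem_range.2 ((Finset.mem_filter.1 hx).2)
      · intro v hv
        have hvm := Finset.mem_range.1 hv
        have hvn : v < Fintype.card X := lt_of_lt_of_le hvm hmn
        have hbij : Function.Bijective
            (fun x => (⟨rk r x, hrk_lt x⟩ : Fin (Fintype.card X))) := by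
          rw [Fintype.bijective_iff_injective_and_card]
          exact ⟨fun x y h => hinj (congrArg Fin.val h), by simp⟩
        obtain ⟨x, hx⟩ := hbij.2 ⟨v, hvn⟩
        have hxv : rk r x = v := congrArg Fin.val hx
        exact Finset.mem_image.2
          ⟨x, Finset.mem_filter.2 ⟨Finset.mem_univ x, hxv ▸ hvm⟩, hxv⟩
    have h3 := Finset.card_image_of_injective T hinj
    rw [himg, Finset.card_range] at h3
    exact h3.symm
  refine ⟨T, hcard, ?_⟩
  intro A B hrev
  by_contra hcon
  rw [not_or] at hcon
  obtain ⟨hAn, hBn, hAB, hne, hA2, hB2⟩ := hrev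
  have hAm : ¬ rk r (c A) < m :=
    fun h => hcon.1 (Finset.mem_filter.2 ⟨Finset.mem_univ _, h⟩)
  have hBm : ¬ rk r (c B) < m :=
    fun h => hcon.2 (Finset.mem_filter.2 ⟨Finset.mem_univ _, h⟩)
  obtain ⟨i, hiI, hmax⟩ := hR.2.2 A hAn
  obtain ⟨i', hiI', hmax'⟩ := hR.2.2 B hBn
  have h1 := hmax.2 (c B) (Finset.mem_inter.1 hB2).1 (Ne.symm hne)
  have h2 := hmax'.2 (c A) (Finset.mem_inter.1 hA2).2 hne
  have hr1 : r (c A) (c B) := by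
    rcases h1 with ⟨ht, _⟩ | ⟨_, _, hrr⟩
    · exact absurd (lt_of_lt_of_le (mem_topSet.1 ht) (hIm i hiI)) hBm
    · exact hrr
  have hr2 : r (c B) (c A) := by
    rcases h2 with ⟨ht, _⟩ | ⟨_, _, hrr⟩
    · exact absurd (lt_of_lt_of_le (mem_topSet.1 ht) (hIm i' hiI')) hAm
    · exact hrr
  exact hr.1 _ _ hr1 hr2

end Aux4

theorem stmt13 [Fintype X] [DecidableEq X] (c : Finset X → X) (hc : IsChoice c)
    (j : ℕ) (hj1 : 1 ≤ j) (hj2 : j ≤ Fintype.card X - 1) :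
    sp c = j ↔ ViolatesCNS c j := by
  classical
  set S := { m : ℕ | ∃ r : X → X → Prop, IsSLO r ∧ ∃ I : Finset ℕ,
    RSP c r I ∧ m ∈ I ∧ ∀ i ∈ I, i ≤ m } with hSdef
  have hsp : sp c = sInf S := rfl
  have hc1 : Fintype.card X - 1 ≤ Fintype.card X := Nat.sub_le _ _
  constructor
  · intro h
    have hSne : S.Nonempty := by
      by_contra hS
      rw [Set.not_nonempty_iff_eq_empty] at hS
      rw [hsp, hS, Nat.sInf_empty] at h
      omega
    have hjS : j ∈ S := by rw [hsp] at h; exact h ▸ Nat.sInf_mem hSne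
    obtain ⟨r, hr, I, hRSP, hjI, hIj⟩ := hjS
    obtain ⟨T, hTcard, hTcov⟩ := spmem_covers hr hRSP hIj (le_trans hj2 hc1)
    have key : ∀ T' : Finset X, T'.card = j - 1 → ¬ Covers c T' := by
      intro T' hcc hcov'
      have hmem : (j - 1) ∈ S :=
        covers_mem_spSet hc hcov' hcc (le_trans (Nat.sub_le j 1) hj2)
      have hle := Nat.sInf_le hmem
      rw [← hsp, h] at hle
      omega
    refine ⟨?_, T, hTcard, hTcov, ?_⟩
    · intro D hD
      by_contra hno
      obtain ⟨D', hDD', hD'⟩ := Finset.exists_superset_card_eq (n := j - 1) (s := D)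
        (by omega) (by omega)
      apply key D' hD'
      intro A B hrev
      by_cases hA : c A ∈ D
      · exact Or.inl (hDD' hA)
      · by_cases hB : c B ∈ D
        · exact Or.inr (hDD' hB)
        · exact absurd ⟨A, B, hrev, hA, hB⟩ hno
    · intro x hx
      by_contra hnb
      apply key (T.erase x) (by rw [Finset.card_erase_of_mem hx, hTcard])
      intro A B hrev
      have hne := hrev.2.2.2.1
      rcases hTcov A B hrev with hA | hB
      · by_cases hAx : c A = x
        · by_cases hBT : c B ∈ T
          · exact Or.inr (Finset.mem_erase.2 ⟨fun hbx => hne (hAx.trans hbx.symm), hBT⟩)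
          · exact absurd ⟨A, B, c B, hrev, hBT, Or.inl ⟨hAx, rfl⟩⟩ hnb
        · exact Or.inl (Finset.mem_erase.2 ⟨hAx, hA⟩)
      · by_cases hBx : c B = x
        · by_cases hAT : c A ∈ T
          · exact Or.inl (Finset.mem_erase.2 ⟨fun hax => hne (hax.trans hBx.symm), hAT⟩)
          · exact absurd ⟨A, B, c A, hrev, hAT, Or.inr ⟨rfl, hBx⟩⟩ hnb
        · exact Or.inr (Finset.mem_erase.2 ⟨hBx, hB⟩)
  · rintro ⟨hmin, xs, hxscard, hxscov, -⟩
    have hjS : j ∈ S := covers_mem_spSet hc hxscov hxscard hj2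
    have hSne : S.Nonempty := ⟨j, hjS⟩
    have hle : sInf S ≤ j := Nat.sInf_le hjS
    obtain ⟨r, hr, I, hRSP, hmI, hIm⟩ := Nat.sInf_mem hSne
    obtain ⟨T, hTcard, hTcov⟩ :=
      spmem_covers hr hRSP hIm (le_trans hle (le_trans hj2 hc1))
    rw [hsp]
    rcases eq_or_lt_of_le hle with heq | hlt
    · exact heq
    · exfalso
      obtain ⟨A, B, hrev, hA, hB⟩ := hmin T (by rw [hTcard]; exact hlt)
      rcases hTcov A B hrev with hm | hm
      exacts [hA hm, hB hm]
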